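/- Let X be a Banach space satisfying Opial's condition, C a nonempty weakly compact convex subset of X, and T : C → C a mapping satisfying condition (D_a). Then T has a fixed point in C. -/

import Mathlib

open Filter Topology

variable {X : Type*}

/-- The set `C(T, x, α)` from the definition of condition `(D_a)`. -/
def DaSet [NormedAddCommGroup X] [NormedSpace ℝ X]
    (C : Set X) (T : X → X) (x : X) (α : ℝ) : Set X :=
  {y ∈ C | ∃ p ∈ C, ∃ q ∈ C, ‖T p - p‖ ≤ ‖T x - x‖ ∧ ‖T q - q‖ ≤ ‖T x - x‖ ∧
    y = (1 - α) • p + α • T q}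

/-- `T` satisfies condition `(D_a)` on `C` with constant `a`. -/
def CondDa [NormedAddCommGroup X] [NormedSpace ℝ X]
    (C : Set X) (T : X → X) (a : ℝ) : Prop :=
  ∀ α ∈ Set.Icc a 1, ∀ x ∈ C, ∀ y ∈ DaSet C T x α, ‖T x - T y‖ ≤ ‖x - y‖

/-- Weak convergence of a sequence in a normed space. -/
def WeakConv [NormedAddCommGroup X] [NormedSpace ℝ X] (u : ℕ → X) (x : X) : Prop :=
  ∀ f : X →L[ℝ] ℝ, Tendsto (fun n => f (u n)) atTop (𝓝 (f x))

/-- Opial's condition. -/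
def OpialCond (X : Type*) [NormedAddCommGroup X] [NormedSpace ℝ X] : Prop :=
  ∀ (u : ℕ → X) (x : X), WeakConv u x → ∀ y, y ≠ x →
    liminf (fun n => ‖u n - x‖) atTop < liminf (fun n => ‖u n - y‖) atTop



section Aux

theorem weak_compact_bounded [NormedAddCommGroup X] [NormedSpace ℝ X] {C : Set X} (hcomp : IsCompact ((toWeakSpace ℝ X) '' C)) :
    ∃ D : ℝ, ∀ p ∈ C, ‖p‖ ≤ D := by
  have key : ∀ f : StrongDual ℝ X, ∃ M, ∀ c : C,
      ‖(NormedSpace.inclusionInDoubleDual ℝ X (c : X)) f‖ ≤ M := by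
    intro f
    have hcont : Continuous fun v : WeakSpace ℝ X => f v :=
      WeakBilin.eval_continuous ((topDualPairing ℝ X).flip) f
    have himg : IsCompact ((fun v : WeakSpace ℝ X => f v) '' ((toWeakSpace ℝ X) '' C)) :=
      hcomp.image hcont
    obtain ⟨M, hM⟩ := himg.isBounded.subset_ball 0
    refine ⟨|M|, fun c => ?_⟩
    have hmem : f (c : X) ∈ (fun v : WeakSpace ℝ X => f v) '' ((toWeakSpace ℝ X) '' C) :=
      ⟨toWeakSpace ℝ X (c : X), Set.mem_image_of_mem _ c.2, rfl⟩
    have := hM hmem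
    simp only [Metric.mem_ball, Real.dist_eq, sub_zero] at this
    have h1 : |f (c : X)| ≤ |M| := this.le.trans (le_abs_self M)
    simpa [NormedSpace.dual_def, Real.norm_eq_abs] using h1
  obtain ⟨D, hD⟩ := banach_steinhaus
    (g := fun c : C => NormedSpace.inclusionInDoubleDual ℝ X (c : X)) key
  refine ⟨D, fun p hp => ?_⟩
  have h2 := hD ⟨p, hp⟩
  have h3 : ‖NormedSpace.inclusionInDoubleDual ℝ X p‖ = ‖p‖ :=
    (NormedSpace.inclusionInDoubleDualLi ℝ (E := X)).norm_map p
  simpa [h3] using h2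


theorem afps [NormedAddCommGroup X] [NormedSpace ℝ X] {C : Set X} (hconv : Convex ℝ C)
    {T : X → X} (hT : Set.MapsTo T C C)
    {a : ℝ} (ha0 : 0 < a) (ha1 : a < 1) (hDa : CondDa C T a)
    {c0 : X} (hc0 : c0 ∈ C)
    {D : ℝ} (hD : ∀ p ∈ C, ∀ q ∈ C, ‖p - q‖ ≤ D) :
    ∃ x : ℕ → X, (∀ n, x n ∈ C) ∧
      (∀ n, x (n + 1) = (1 - a) • x n + a • T (x n)) ∧
      Tendsto (fun n => ‖T (x n) - x n‖) atTop (𝓝 0) := by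
  set x : ℕ → X := fun n => Nat.recAux c0 (fun _ xn => (1 - a) • xn + a • T xn) n with hx
  have hrec : ∀ n, x (n + 1) = (1 - a) • x n + a • T (x n) := fun n => rfl
  have hmem : ∀ n, x n ∈ C := by
    intro n; induction n with
    | zero => exact hc0
    | succ n ih => exact hrec n ▸ hconv ih (hT ih) (by linarith) ha0.le (by ring)
  set d : ℕ → ℝ := fun n => ‖T (x n) - x n‖ with hd
  have hd0 : ∀ n, 0 ≤ d n := fun n => norm_nonneg _
  have hDmem : ∀ n, x (n + 1) ∈ DaSet C T (x n) a :=
    fun n => ⟨hmem (n + 1), x n, hmem n, x n, hmem n, le_refl _, le_refl _, hrec n⟩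
  have hne : ∀ n, ‖T (x n) - T (x (n + 1))‖ ≤ ‖x n - x (n + 1)‖ :=
    fun n => hDa a ⟨le_refl a, ha1.le⟩ (x n) (hmem n) _ (hDmem n)
  have hdiff : ∀ n, x (n + 1) - x n = a • (T (x n) - x n) := by
    intro n; rw [hrec n]; rw [sub_smul, one_smul, smul_sub]; abel
  have hstep : ∀ n, ‖x (n + 1) - x n‖ = a * d n := by
    intro n; rw [hdiff n, norm_smul, Real.norm_eq_abs, abs_of_pos ha0]
  have hanti1 : ∀ n, d (n + 1) ≤ d n := by
    intro n
    have h1 : T (x n) - x (n + 1) = (1 - a) • (T (x n) - x n) := by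
      rw [hrec n]; module
    have h2 : T (x (n + 1)) - x (n + 1) =
        (T (x (n + 1)) - T (x n)) + (T (x n) - x (n + 1)) := by abel
    calc d (n + 1) = ‖T (x (n + 1)) - x (n + 1)‖ := rfl
      _ = ‖(T (x (n + 1)) - T (x n)) + (T (x n) - x (n + 1))‖ := by rw [h2]
      _ ≤ ‖T (x (n + 1)) - T (x n)‖ + ‖T (x n) - x (n + 1)‖ := norm_add_le _ _
      _ ≤ ‖x n - x (n + 1)‖ + (1 - a) * d n := by
          rw [h1, norm_smul, Real.norm_eq_abs, abs_of_pos (by linarith : (0:ℝ) < 1 - a)]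
          have := hne n; rw [norm_sub_rev (T (x n))] at this
          exact add_le_add this (le_refl _)
      _ = a * d n + (1 - a) * d n := by rw [norm_sub_rev, hstep n]
      _ = d n := by ring
  have hanti : Antitone d := antitone_nat_of_succ_le hanti1
  have tele : ∀ i m, ‖T (x i) - T (x (i + m))‖ ≤ m * (a * d i) := by
    intro i m; induction m with
    | zero => simp
    | succ m ih =>
        have h1 : ‖T (x (i + m)) - T (x (i + m + 1))‖ ≤ a * d (i + m) := by
          calc ‖T (x (i + m)) - T (x (i + m + 1))‖ ≤ ‖x (i + m) - x (i + m + 1)‖ := hne _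
            _ = a * d (i + m) := by rw [norm_sub_rev, hstep]
        calc ‖T (x i) - T (x (i + (m + 1)))‖
            = ‖(T (x i) - T (x (i + m))) + (T (x (i + m)) - T (x (i + m + 1)))‖ := by
              rw [show i + (m + 1) = i + m + 1 from rfl]; congr 1; abel
          _ ≤ ‖T (x i) - T (x (i + m))‖ + ‖T (x (i + m)) - T (x (i + m + 1))‖ := norm_add_le _ _
          _ ≤ m * (a * d i) + a * d (i + m) := add_le_add ih h1
          _ ≤ m * (a * d i) + a * d i := by
              have := hanti (Nat.le_add_right i m)
              have := mul_le_mul_of_nonneg_left this ha0.le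
              linarith
          _ = (m + 1 : ℕ) * (a * d i) := by push_cast; ring
  -- Bernoulli-type: (1 + n*a) * (1-a)^n ≤ 1
  have bern : ∀ n : ℕ, (1 + n * a) * (1 - a) ^ n ≤ 1 := by
    intro n; induction n with
    | zero => simp
    | succ n ih =>
        have hc : (0:ℝ) < 1 - a := by linarith
        have h1 : (1 + ((n : ℝ) + 1) * a) * (1 - a) ≤ 1 + n * a := by nlinarith [sq_nonneg a]
        calc (1 + ((n + 1 : ℕ) : ℝ) * a) * (1 - a) ^ (n + 1)
            = ((1 + ((n:ℝ) + 1) * a) * (1 - a)) * (1 - a) ^ n := by push_cast; ring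
          _ ≤ (1 + (n:ℝ) * a) * (1 - a) ^ n := by
              apply mul_le_mul_of_nonneg_right h1 (pow_nonneg hc.le n)
          _ ≤ 1 := ih
  have hc : (0:ℝ) < 1 - a := by linarith
  -- Goebel–Kirk inequality
  have GK : ∀ n i, (1 + n * a) * d i - ((1 - a)⁻¹) ^ n * (d i - d (i + n)) ≤
      ‖x i - T (x (i + n))‖ := by
    intro n
    induction n with
    | zero => intro i; simp [norm_sub_rev, hd]
    | succ n ih =>
        intro i
        set e : ℝ := ((1 - a)⁻¹) ^ n with he'
        have hepos : 0 < e := pow_pos (inv_pos.mpr hc) n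
        have he : 1 + n * a ≤ e := by
          have h1 : (1 + n * a) * (1 - a) ^ n ≤ 1 := bern n
          have h2 : (1 - a) ^ n * e = 1 := by
            rw [he', ← mul_pow]; rw [mul_inv_cancel₀ (ne_of_gt hc), one_pow]
          nlinarith [pow_pos hc n]
        have ih' := ih (i + 1)
        have hidx : i + 1 + n = i + n + 1 := by omega
        rw [hidx] at ih'
        have hv : (1 - a) • (x i - T (x (i + n + 1))) =
            (x (i + 1) - T (x (i + n + 1))) - a • (T (x i) - T (x (i + n + 1))) := by
          rw [hrec i]; module
        have hnorm : ‖x (i + 1) - T (x (i + n + 1))‖ - a * ‖T (x i) - T (x (i + n + 1))‖ ≤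
            (1 - a) * ‖x i - T (x (i + n + 1))‖ := by
          calc ‖x (i + 1) - T (x (i + n + 1))‖ - a * ‖T (x i) - T (x (i + n + 1))‖
              = ‖x (i + 1) - T (x (i + n + 1))‖ - ‖a • (T (x i) - T (x (i + n + 1)))‖ := by
                rw [norm_smul, Real.norm_eq_abs, abs_of_pos ha0]
            _ ≤ ‖(x (i + 1) - T (x (i + n + 1))) - a • (T (x i) - T (x (i + n + 1)))‖ :=
                norm_sub_norm_le _ _
            _ = ‖(1 - a) • (x i - T (x (i + n + 1)))‖ := by rw [hv]
            _ = (1 - a) * ‖x i - T (x (i + n + 1))‖ := by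
                rw [norm_smul, Real.norm_eq_abs, abs_of_pos hc]
        have htele : ‖T (x i) - T (x (i + (n + 1)))‖ ≤ ((n:ℝ) + 1) * (a * d i) := by
          have := tele i (n + 1); push_cast at this; exact this
        rw [show i + (n + 1) = i + n + 1 from rfl] at htele
        have key : (1 + n * a - e) * d i ≤ (1 + n * a - e) * d (i + 1) :=
          mul_le_mul_of_nonpos_left (hanti (Nat.le_succ i)) (by linarith)
        -- multiply goal by (1 - a)
        rw [show i + (n + 1) = i + n + 1 from rfl]
        rw [show ((1 - a)⁻¹) ^ (n + 1) = (1 - a)⁻¹ * e from by rw [he', pow_succ]; ring]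
        rw [← mul_le_mul_iff_right₀ hc]
        have hinv : (1 - a) * (1 - a)⁻¹ = 1 := mul_inv_cancel₀ (ne_of_gt hc)
        have expand : (1 - a) * ((1 + (↑n + 1) * a) * d i - (1 - a)⁻¹ * e * (d i - d (i + n + 1)))
            = (1 - a) * (1 + ((n:ℝ) + 1) * a) * d i - e * (d i - d (i + n + 1)) := by
          field_simp
        push_cast
        rw [expand]
        have hmul : a * ‖T (x i) - T (x (i + n + 1))‖ ≤ a * ((n + 1) * (a * d i)) :=
          mul_le_mul_of_nonneg_left htele ha0.le
        nlinarith [ih', hnorm, key, hd0 i, hd0 (i + 1), hd0 (i + n + 1)]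
  -- conclude d → 0
  have hbdd : BddBelow (Set.range d) := ⟨0, by rintro _ ⟨n, rfl⟩; exact hd0 n⟩
  have htend : Tendsto d atTop (𝓝 (⨅ n, d n)) := tendsto_atTop_ciInf hanti hbdd
  set L : ℝ := ⨅ n, d n with hL
  have hL0 : 0 ≤ L := le_ciInf hd0
  have hLle : ∀ n, L ≤ d n := fun n => ciInf_le hbdd n
  have hLzero : L = 0 := by
    by_contra hne0
    have hLpos : 0 < L := lt_of_le_of_ne hL0 (Ne.symm hne0)
    obtain ⟨n, hn⟩ := exists_nat_gt ((D + 1) / (a * L))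
    have han : D + 1 < (1 + n * a) * L := by
      have h1 : (D + 1) / (a * L) * (a * L) < n * (a * L) :=
        mul_lt_mul_of_pos_right hn (by positivity)
      rw [div_mul_cancel₀ _ (by positivity)] at h1
      nlinarith
    have hiex : ∃ i, d i < L + (1 - a) ^ n := by
      apply exists_lt_of_ciInf_lt
      rw [← hL]; linarith [pow_pos hc n]
    obtain ⟨i, hi⟩ := hiex
    have hsub : d i - d (i + n) < (1 - a) ^ n := by
      have := hLle (i + n); linarith
    have hprod : ((1 - a)⁻¹) ^ n * (d i - d (i + n)) < 1 := by
      calc ((1 - a)⁻¹) ^ n * (d i - d (i + n)) < ((1 - a)⁻¹) ^ n * (1 - a) ^ n := by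
            apply mul_lt_mul_of_pos_left hsub (pow_pos (inv_pos.mpr hc) n)
        _ = 1 := by rw [← mul_pow, inv_mul_cancel₀ (ne_of_gt hc), one_pow]
    have hgk := GK n i
    have hDi : ‖x i - T (x (i + n))‖ ≤ D := hD _ (hmem i) _ (hT (hmem (i + n)))
    have : (1 + n * a) * L ≤ (1 + n * a) * d i :=
      mul_le_mul_of_nonneg_left (hLle i) (by positivity)
    linarith
  rw [hLzero] at htend
  exact ⟨x, hmem, hrec, htend⟩


theorem weak_subseq [NormedAddCommGroup X] [NormedSpace ℝ X] {C : Set X} (hcomp : IsCompact ((toWeakSpace ℝ X) '' C))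
    (u : ℕ → X) (hu : ∀ n, u n ∈ C) :
    ∃ z ∈ C, ∃ φ : ℕ → ℕ, StrictMono φ ∧ WeakConv (fun j => u (φ j)) z := by
  classical
  set S : Submodule ℝ X := (Submodule.span ℝ (Set.range u)).topologicalClosure with hS
  have hSclosed : IsClosed (S : Set X) := Submodule.isClosed_topologicalClosure _
  have huS : ∀ n, u n ∈ S :=
    fun n => Submodule.le_topologicalClosure _ (Submodule.subset_span ⟨n, rfl⟩)
  have hSsep : TopologicalSpace.IsSeparable (S : Set X) := by
    have h1 : TopologicalSpace.IsSeparable (Set.range u) :=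
      (Set.countable_range u).isSeparable
    exact h1.span.closure
  obtain ⟨c, hc_count, hc_sub⟩ := hSsep
  set c' : Set X := insert 0 c with hc'
  have hc'_count : c'.Countable := hc_count.insert 0
  have hc'_ne : c'.Nonempty := ⟨0, Set.mem_insert 0 c⟩
  obtain ⟨y, hy⟩ := Set.Countable.exists_eq_range hc'_count hc'_ne
  have hc_sub' : (S : Set X) ⊆ closure (Set.range y) := by
    rw [← hy]; exact hc_sub.trans (closure_mono (Set.subset_insert 0 c))
  choose f hf1 hf2 using fun k => exists_dual_vector'' ℝ (y k)
  -- separation of points of S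
  have hsep : ∀ v ∈ (S : Set X), ∀ w ∈ (S : Set X), (∀ k, f k v = f k w) → v = w := by
    intro v hv w hw hvw
    have hwv : v - w ∈ (S : Set X) := S.sub_mem hv hw
    have key : ∀ ε : ℝ, 0 < ε → ‖v - w‖ ≤ 0 + ε := by
      intro ε hε
      obtain ⟨b, hb, hdist⟩ := Metric.mem_closure_iff.mp (hc_sub' hwv) (ε / 2) (by linarith)
      obtain ⟨k, rfl⟩ := hb
      have hfk0 : f k (v - w) = 0 := by
        rw [map_sub, hvw k, sub_self]
      have h1 : ‖y k‖ = f k (y k - (v - w)) := by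
        rw [map_sub, hfk0, sub_zero, hf2 k]; simp
      have h2 : f k (y k - (v - w)) ≤ ‖y k - (v - w)‖ := by
        calc f k (y k - (v - w)) ≤ ‖f k (y k - (v - w))‖ := le_abs_self _
          _ ≤ ‖f k‖ * ‖y k - (v - w)‖ := (f k).le_opNorm _
          _ ≤ 1 * ‖y k - (v - w)‖ := by
              apply mul_le_mul_of_nonneg_right (hf1 k) (norm_nonneg _)
          _ = ‖y k - (v - w)‖ := one_mul _
      have h3 : ‖y k - (v - w)‖ < ε / 2 := by
        rw [← dist_eq_norm, dist_comm]; exact hdist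
      have hdecomp : v - w = (v - w - y k) + y k := by abel
      calc ‖v - w‖ = ‖(v - w - y k) + y k‖ := by rw [← hdecomp]
        _ ≤ ‖v - w - y k‖ + ‖y k‖ := norm_add_le _ _
        _ ≤ ε / 2 + ε / 2 := by
            have hA : ‖v - w - y k‖ ≤ ε / 2 := by rw [← dist_eq_norm]; exact hdist.le
            have hB : ‖y k‖ ≤ ε / 2 := by rw [h1]; linarith
            exact add_le_add hA hB
        _ = 0 + ε := by ring
    have : ‖v - w‖ ≤ 0 := le_of_forall_pos_le_add key
    have : v - w = 0 := norm_le_zero_iff.mp this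
    exact sub_eq_zero.mp this
  -- weak closedness of the image of S
  have hSconv : Convex ℝ (S : Set X) := S.convex
  have hSweak : IsClosed ((toWeakSpace ℝ X) '' (S : Set X)) := by
    have h1 := hSconv.toWeakSpace_closure (𝕜 := ℝ)
    rw [hSclosed.closure_eq] at h1
    rw [h1]
    exact isClosed_closure
  set K : Set (WeakSpace ℝ X) :=
    ((toWeakSpace ℝ X) '' C) ∩ ((toWeakSpace ℝ X) '' (S : Set X)) with hK
  have hKcomp : IsCompact K := hcomp.inter_right hSweak
  set Φ : WeakSpace ℝ X → (ℕ → ℝ) := fun v k => f k ((toWeakSpace ℝ X).symm v) with hΦ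
  have hΦcont : Continuous Φ := by
    apply continuous_pi
    intro k
    exact WeakBilin.eval_continuous ((topDualPairing ℝ X).flip) (f k)
  have hKmem : ∀ n, toWeakSpace ℝ X (u n) ∈ K :=
    fun n => ⟨Set.mem_image_of_mem _ (hu n), Set.mem_image_of_mem _ (huS n)⟩
  have hseqcomp : IsSeqCompact (Φ '' K) := (hKcomp.image hΦcont).isSeqCompact
  obtain ⟨ℓ, hℓ, φ, hφmono, hφconv⟩ :=
    hseqcomp (x := fun n => Φ (toWeakSpace ℝ X (u n)))
      (fun n => Set.mem_image_of_mem _ (hKmem n))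
  obtain ⟨z, hzK, hzℓ⟩ := hℓ
  -- subtype argument
  have hKc : CompactSpace ↥K := isCompact_iff_compactSpace.mp hKcomp
  set Ψ : ↥K → (ℕ → ℝ) := fun v => Φ (v : WeakSpace ℝ X) with hΨ
  have hΨcont : Continuous Ψ := hΦcont.comp continuous_subtype_val
  have hΨinj : Function.Injective Ψ := by
    rintro ⟨va, hva⟩ ⟨vb, hvb⟩ hab
    obtain ⟨wa, hwaS, hwa⟩ := hva.2
    obtain ⟨wb, hwbS, hwb⟩ := hvb.2
    have hfab : ∀ k, f k wa = f k wb := by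
      intro k
      have := congrFun hab k
      simp only [hΨ, hΦ, ← hwa, ← hwb, LinearEquiv.symm_apply_apply] at this
      exact this
    have : wa = wb := hsep wa hwaS wb hwbS hfab
    apply Subtype.ext
    show va = vb
    rw [← hwa, ← hwb, this]
  have hemb : Topology.IsClosedEmbedding Ψ := hΨcont.isClosedEmbedding hΨinj
  set w : ℕ → ↥K := fun j => ⟨toWeakSpace ℝ X (u (φ j)), hKmem (φ j)⟩ with hw
  have htend : Tendsto w atTop (𝓝 ⟨z, hzK⟩) := by
    rw [hemb.toIsInducing.tendsto_nhds_iff]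
    have : (Ψ ∘ w) = fun j => Φ (toWeakSpace ℝ X (u (φ j))) := rfl
    rw [this]
    rw [show Ψ ⟨z, hzK⟩ = ℓ from hzℓ]
    exact hφconv
  have htend2 : Tendsto (fun j => toWeakSpace ℝ X (u (φ j))) atTop (𝓝 z) :=
    (continuous_subtype_val.tendsto _).comp htend
  refine ⟨(toWeakSpace ℝ X).symm z, ?_, φ, hφmono, ?_⟩
  · obtain ⟨cz, hcz, hcz2⟩ := hzK.1
    rw [← hcz2, LinearEquiv.symm_apply_apply]
    exact hcz
  · intro g
    have hgcont : Continuous fun v : WeakSpace ℝ X => g ((toWeakSpace ℝ X).symm v) :=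
      WeakBilin.eval_continuous ((topDualPairing ℝ X).flip) g
    have := (hgcont.tendsto z).comp htend2
    simpa [LinearEquiv.symm_apply_apply, Function.comp_def] using this

end Aux

theorem stmt3 [NormedAddCommGroup X] [NormedSpace ℝ X] [CompleteSpace X]
    (hOp : OpialCond X)
    {C : Set X} (hC : C.Nonempty) (hconv : Convex ℝ C)
    (hcomp : IsCompact ((toWeakSpace ℝ X) '' C))
    {T : X → X} (hT : Set.MapsTo T C C)
    {a : ℝ} (ha : a ∈ Set.Ioo (1/2 : ℝ) 1) (hDa : CondDa C T a) :
    ∃ p ∈ C, T p = p := by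
  obtain ⟨D', hD'⟩ := weak_compact_bounded hcomp
  have hD : ∀ p ∈ C, ∀ q ∈ C, ‖p - q‖ ≤ 2 * D' := by
    intro p hp q hq
    calc ‖p - q‖ ≤ ‖p‖ + ‖q‖ := norm_sub_le _ _
      _ ≤ D' + D' := add_le_add (hD' p hp) (hD' q hq)
      _ = 2 * D' := by ring
  obtain ⟨c0, hc0⟩ := hC
  have ha0 : (0:ℝ) < a := lt_trans (by norm_num) ha.1
  obtain ⟨x, hmem, hrec, htend⟩ := afps hconv hT ha0 ha.2 hDa hc0 hD
  obtain ⟨z, hzC, φ, hφ, hwc⟩ := weak_subseq hcomp x hmem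
  by_cases hfix : T z = z
  · exact ⟨z, hzC, hfix⟩
  exfalso
  have hr : 0 < ‖T z - z‖ := by
    rw [norm_pos_iff, sub_ne_zero]; exact hfix
  -- d (φ j) → 0
  have hdphi : Tendsto (fun j => ‖T (x (φ j)) - x (φ j)‖) atTop (𝓝 0) :=
    htend.comp hφ.tendsto_atTop
  -- φ j - 1 → atTop
  have hφ1 : Tendsto (fun j => φ j - 1) atTop atTop := by
    apply tendsto_atTop_atTop.mpr
    intro b
    refine ⟨b + 1, fun j hj => ?_⟩
    have : j ≤ φ j := hφ.le_apply
    omega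
  have hdphi1 : Tendsto (fun j => ‖T (x (φ j - 1)) - x (φ j - 1)‖) atTop (𝓝 0) :=
    htend.comp hφ1
  have hev1 : ∀ᶠ j in atTop, ‖T (x (φ j - 1)) - x (φ j - 1)‖ ≤ ‖T z - z‖ :=
    hdphi1.eventually_le_const hr
  have hev2 : ∀ᶠ j in atTop, 1 ≤ φ j := hφ.tendsto_atTop.eventually_ge_atTop 1
  -- key pointwise inequality
  have hkey : ∀ᶠ j in atTop, ‖x (φ j) - T z‖ ≤
      ‖T (x (φ j)) - x (φ j)‖ + ‖x (φ j) - z‖ := by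
    filter_upwards [hev1, hev2] with j h1 h2
    set m := φ j - 1 with hm
    have hφj : φ j = m + 1 := by omega
    have hmemDa : x (φ j) ∈ DaSet C T z a := by
      refine ⟨hmem _, x m, hmem m, x m, hmem m, h1, h1, ?_⟩
      rw [hφj]; exact hrec m
    have hne : ‖T z - T (x (φ j))‖ ≤ ‖z - x (φ j)‖ :=
      hDa a ⟨le_refl a, ha.2.le⟩ z hzC _ hmemDa
    calc ‖x (φ j) - T z‖
        = ‖(x (φ j) - T (x (φ j))) + (T (x (φ j)) - T z)‖ := by congr 1; abel
      _ ≤ ‖x (φ j) - T (x (φ j))‖ + ‖T (x (φ j)) - T z‖ := norm_add_le _ _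
      _ ≤ ‖T (x (φ j)) - x (φ j)‖ + ‖x (φ j) - z‖ := by
          have hne' : ‖T (x (φ j)) - T z‖ ≤ ‖x (φ j) - z‖ := by
            rw [norm_sub_rev (T (x (φ j))), norm_sub_rev (x (φ j))]; exact hne
          exact add_le_add (le_of_eq (norm_sub_rev _ _)) hne'
  -- Opial
  have hop := hOp (fun j => x (φ j)) z hwc (T z) hfix
  set L1 := liminf (fun j => ‖x (φ j) - z‖) atTop with hL1
  set L2 := liminf (fun j => ‖x (φ j) - T z‖) atTop with hL2
  have hε : 0 < (L2 - L1) / 2 := by simp only [hL1, hL2] at hop ⊢; linarith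
  have hev3 : ∀ᶠ j in atTop, ‖T (x (φ j)) - x (φ j)‖ ≤ (L2 - L1) / 2 :=
    hdphi.eventually_le_const hε
  have hev4 : ∀ᶠ j in atTop, ‖x (φ j) - T z‖ ≤ ‖x (φ j) - z‖ + (L2 - L1) / 2 := by
    filter_upwards [hkey, hev3] with j h1 h2; linarith
  have hbdd_above : IsBoundedUnder (· ≤ ·) atTop (fun j : ℕ => ‖x (φ j) - z‖) :=
    isBoundedUnder_of ⟨2 * D', fun j => hD (x (φ j)) (hmem _) z hzC⟩
  have hbdd_below : IsBoundedUnder (· ≥ ·) atTop (fun j : ℕ => ‖x (φ j) - z‖) :=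
    isBoundedUnder_of ⟨0, fun j => norm_nonneg (x (φ j) - z)⟩
  have hcob : IsCoboundedUnder (· ≥ ·) atTop (fun j : ℕ => ‖x (φ j) - z‖) :=
    hbdd_above.isCoboundedUnder_ge
  have hstep : L2 ≤ L1 + (L2 - L1) / 2 := by
    have hb1 : IsBoundedUnder (· ≥ ·) atTop (fun j : ℕ => ‖x (φ j) - T z‖) :=
      isBoundedUnder_of ⟨0, fun j => norm_nonneg (x (φ j) - T z)⟩
    have hb2 : IsBoundedUnder (· ≤ ·) atTop (fun j : ℕ => ‖x (φ j) - z‖ + (L2 - L1) / 2) :=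
      isBoundedUnder_of ⟨2 * D' + (L2 - L1) / 2, fun j =>
        add_le_add (hD (x (φ j)) (hmem _) z hzC) (le_refl _)⟩
    have h1 : L2 ≤ liminf (fun j : ℕ => ‖x (φ j) - z‖ + (L2 - L1) / 2) atTop :=
      liminf_le_liminf hev4 hb1 hb2.isCoboundedUnder_ge
    have h2 : liminf (fun j => ‖x (φ j) - z‖ + (L2 - L1) / 2) atTop = L1 + (L2 - L1) / 2 :=
      liminf_add_const atTop _ _ hcob hbdd_below
    rw [h2] at h1; exact h1
  simp only [hL1, hL2] at hop hstep
  linarith
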